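/- Let n be a positive natural number and let G be a subgroup of the group of invertible n×n real matrices such that the corresponding set of matrices is compact (so G is a compact matrix Lie group with the subspace topology). Let f : G → G be a group homomorphism that is continuous and injective. Then f is surjective. -/

import Mathlib

open Topology MeasureTheory MvPolynomial

variable {n : ℕ}
abbrev Mat (n : ℕ) := Matrix (Fin n) (Fin n) ℝ
def ev (x : Mat n) : Fin n × Fin n → ℝ := fun p => x p.1 p.2

theorem cont_eval {X : Type*} [TopologicalSpace X] {σ : Type*} (P : MvPolynomial σ ℝ)
    (v : X → σ → ℝ) (hv : ∀ s, Continuous fun x => v x s) :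
    Continuous fun x => eval (v x) P := by
  induction P using MvPolynomial.induction_on with
  | C a => simpa using continuous_const
  | add p q hp hq => simp only [map_add]; exact hp.add hq
  | mul_X p s hp => simp only [map_mul, eval_X]; exact hp.mul (hv s)

noncomputable def QQ (P : MvPolynomial (Fin n × Fin n) ℝ) :
    MvPolynomial ((Fin n × Fin n) ⊕ (Fin n × Fin n)) ℝ :=
  bind₁ (fun p => ∑ k, X (.inl (p.1, k)) * X (.inr (k, p.2))) P

theorem eval_QQ (P : MvPolynomial (Fin n × Fin n) ℝ) (x h : Mat n) :
    eval (Sum.elim (ev x) (ev h)) (QQ P) = eval (ev (x * h)) P := by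
  rw [QQ]
  show eval₂Hom (RingHom.id ℝ) _ _ = _
  rw [eval₂Hom_bind₁]
  apply MvPolynomial.eval₂Hom_congr rfl ?_ rfl
  funext p
  simp [ev, Matrix.mul_apply]

theorem eval_monomial_sum (u v : Fin n × Fin n → ℝ) (d : ((Fin n × Fin n) ⊕ (Fin n × Fin n)) →₀ ℕ)
    (c : ℝ) :
    eval (Sum.elim u v) (monomial d c) =
      c * (∏ s, u s ^ d (.inl s)) * (∏ s, v s ^ d (.inr s)) := by
  rw [eval_monomial, Finsupp.prod_pow, Fintype.prod_sum_type]
  simp only [Sum.elim_inl, Sum.elim_inr]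
  ring

noncomputable def avgPoly (P : MvPolynomial (Fin n × Fin n) ℝ) {Ω : Type*} [MeasurableSpace Ω]
    (μ : Measure Ω) (w : Ω → Mat n) : MvPolynomial (Fin n × Fin n) ℝ :=
  ∑ d ∈ (QQ P).support,
    monomial (Finsupp.equivFunOnFinite.symm fun s => d (.inl s))
      ((coeff d (QQ P)) * ∫ h, ∏ s, ev (w h) s ^ d (.inr s) ∂μ)

theorem eval_avgPoly (P : MvPolynomial (Fin n × Fin n) ℝ) {Ω : Type*} [MeasurableSpace Ω]
    [TopologicalSpace Ω] [OpensMeasurableSpace Ω] [CompactSpace Ω] [T2Space Ω]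
    (μ : Measure Ω) [IsFiniteMeasure μ] (w : Ω → Mat n) (hw : Continuous w) (x : Mat n) :
    eval (ev x) (avgPoly P μ w) = ∫ h, eval (ev (x * w h)) P ∂μ := by
  have hcont : ∀ d : ((Fin n × Fin n) ⊕ (Fin n × Fin n)) →₀ ℕ,
      Continuous fun h => coeff d (QQ P) * (∏ s, ev x s ^ d (.inl s))
        * ∏ s, ev (w h) s ^ d (.inr s) := by
    intro d
    apply Continuous.mul continuous_const
    refine continuous_finset_prod _ fun s _ => Continuous.pow ?_ _
    exact (continuous_apply _).comp ((continuous_apply _).comp hw)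
  have hint : ∀ d : ((Fin n × Fin n) ⊕ (Fin n × Fin n)) →₀ ℕ,
      Integrable (fun h => coeff d (QQ P) * (∏ s, ev x s ^ d (.inl s))
        * ∏ s, ev (w h) s ^ d (.inr s)) μ := fun d =>
    (hcont d).integrable_of_hasCompactSupport ((isClosed_tsupport _).isCompact)
  rw [avgPoly, map_sum]
  have : ∀ d ∈ (QQ P).support,
      eval (ev x) (monomial (Finsupp.equivFunOnFinite.symm fun s => d (.inl s))
        ((coeff d (QQ P)) * ∫ h, ∏ s, ev (w h) s ^ d (.inr s) ∂μ)) =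
      ∫ h, coeff d (QQ P) * (∏ s, ev x s ^ d (.inl s)) * ∏ s, ev (w h) s ^ d (.inr s) ∂μ := by
    intro d _
    rw [eval_monomial, Finsupp.prod_pow, MeasureTheory.integral_const_mul]
    simp only [Finsupp.coe_equivFunOnFinite_symm]
    ring
  rw [Finset.sum_congr rfl this, ← MeasureTheory.integral_finset_sum _ (fun d _ => hint d)]
  congr 1
  funext h
  rw [← eval_QQ P x (w h), eval_eq']
  congr 1
  funext d
  rw [Fintype.prod_sum_type]
  simp only [Sum.elim_inl, Sum.elim_inr, ev]
  ring

theorem aux_sep {n : ℕ} (K : Subgroup (Mat n)ˣ)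
    (hKc : IsCompact ((K : Set (Mat n)ˣ)))
    (g : Mat n) (hg : g ∉ Units.val '' (K : Set (Mat n)ˣ)) :
    ∃ P : MvPolynomial (Fin n × Fin n) ℝ,
      (∀ x ∈ Units.val '' (K : Set (Mat n)ˣ), eval (ev x) P = 0) ∧ eval (ev g) P ≠ 0 := by
  classical
  set S : Set (Mat n) := Units.val '' (K : Set (Mat n)ˣ) with hS_def
  have hS : IsCompact S := hKc.image Units.continuous_val
  have hSne : S.Nonempty := ⟨1, ⟨1, K.one_mem, rfl⟩⟩
  set gS : Set (Mat n) := (fun m => g * m) '' S with hgS_def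
  have hgS : IsCompact gS := hS.image (continuous_const.mul continuous_id)
  have hdisj : Disjoint S gS := by
    rw [Set.disjoint_left]
    rintro y ⟨u, hu, rfl⟩ ⟨-, ⟨u', hu', rfl⟩, hyy⟩
    apply hg
    have : g = Units.val (u * u'⁻¹) := by
      rw [Units.val_mul, ← hyy]
      show g = g * ↑u' * ↑u'⁻¹
      rw [mul_assoc, ← Units.val_mul, mul_inv_cancel, Units.val_one, mul_one]
    exact this ▸ ⟨u * u'⁻¹, K.mul_mem hu (K.inv_mem hu'), rfl⟩
  -- Urysohn
  haveI : NormalSpace (Mat n) := inferInstanceAs (NormalSpace (Fin n → Fin n → ℝ))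
  obtain ⟨F, hF0, hF1, hF01⟩ := exists_continuous_zero_one_of_isClosed
    hS.isClosed hgS.isClosed hdisj
  -- Stone-Weierstrass on T = S ∪ gS
  set T : Set (Mat n) := S ∪ gS with hT_def
  have hT : IsCompact T := hS.union hgS
  haveI : CompactSpace ↥T := isCompact_iff_compactSpace.mp hT
  let coords : (Fin n × Fin n) → C(↥T, ℝ) := fun s =>
    ⟨fun t => ev (t : Mat n) s,
      (continuous_apply _).comp ((continuous_apply _).comp continuous_subtype_val)⟩
  let Φ : MvPolynomial (Fin n × Fin n) ℝ →ₐ[ℝ] C(↥T, ℝ) := MvPolynomial.aeval coords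
  have hΦev : ∀ (Q : MvPolynomial (Fin n × Fin n) ℝ) (t : ↥T),
      (Φ Q) t = eval (ev (t : Mat n)) Q := by
    intro Q t
    induction Q using MvPolynomial.induction_on with
    | C a => simp [Φ]
    | add p q hp hq => simp [map_add, hp, hq]
    | mul_X p s hp => simp [map_mul, hp, Φ, coords]; exact Or.inl rfl
  have hsep : Φ.range.SeparatesPoints := by
    intro x y hxy
    have : (x : Mat n) ≠ (y : Mat n) := fun h => hxy (Subtype.ext h)
    have : ∃ s : Fin n × Fin n, ev (x : Mat n) s ≠ ev (y : Mat n) s := by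
      by_contra hcon
      push_neg at hcon
      exact this (by ext i j; exact hcon (i, j))
    obtain ⟨s, hs⟩ := this
    exact ⟨_, ⟨coords s, Φ.mem_range.mpr ⟨MvPolynomial.X s, by simp [Φ]⟩, rfl⟩, hs⟩
  obtain ⟨g', hg'⟩ := ContinuousMap.exists_mem_subalgebra_near_continuous_of_separatesPoints
    Φ.range hsep (fun t : ↥T => F (t : Mat n))
    (F.continuous.comp continuous_subtype_val) (1/4) (by norm_num)
  obtain ⟨P₀, hP₀⟩ := Φ.mem_range.mp g'.2
  have happrox : ∀ x ∈ T, |eval (ev x) P₀ - F x| < 1/4 := by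
    intro x hx
    have := hg' ⟨x, hx⟩
    rwa [← hP₀, hΦev P₀ ⟨x, hx⟩, Real.norm_eq_abs] at this
  -- Haar measure on K
  haveI : CompactSpace ↥K := isCompact_iff_compactSpace.mp hKc
  letI : MeasurableSpace ↥K := borel _
  haveI : BorelSpace ↥K := ⟨rfl⟩
  haveI : Nonempty ↥K := ⟨1⟩
  let μ : Measure ↥K := Measure.haarMeasure ⊤
  haveI : IsProbabilityMeasure μ := ⟨by
    rw [← TopologicalSpace.PositiveCompacts.coe_top (α := ↥K)]
    exact Measure.haarMeasure_self⟩
  let w : ↥K → Mat n := fun u => ((u : (Mat n)ˣ) : Mat n)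
  have hw : Continuous w := Units.continuous_val.comp continuous_subtype_val
  have hwS : ∀ h : ↥K, w h ∈ S := fun h => ⟨h, h.2, rfl⟩
  set q := avgPoly P₀ μ w with hq_def
  have hq : ∀ x : Mat n, eval (ev x) q = ∫ h, eval (ev (x * w h)) P₀ ∂μ := fun x =>
    eval_avgPoly P₀ μ w hw x
  set c : ℝ := ∫ h, eval (ev (w h)) P₀ ∂μ with hc_def
  have hconst : ∀ x ∈ S, eval (ev x) q = c := by
    rintro x ⟨u, hu, rfl⟩
    rw [hq]
    have hmul : ∀ h : ↥K, Units.val u * w h = w ((⟨u, hu⟩ : ↥K) * h) := fun h => rfl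
    simp_rw [hmul]
    exact MeasureTheory.integral_mul_left_eq_self (fun h => eval (ev (w h)) P₀) ⟨u, hu⟩
  have hcbound : |c| ≤ 1/4 := by
    rw [← Real.norm_eq_abs]
    have hb : ∀ h : ↥K, ‖eval (ev (w h)) P₀‖ ≤ 1/4 := by
      intro h
      have h1 := happrox (w h) (Or.inl (hwS h))
      have h2 : F (w h) = 0 := hF0 (hwS h)
      rw [h2, sub_zero] at h1
      rw [Real.norm_eq_abs]
      exact le_of_lt h1
    calc ‖c‖ ≤ 1/4 * (μ Set.univ).toReal :=
          MeasureTheory.norm_integral_le_of_norm_le_const (Filter.Eventually.of_forall hb)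
    _ = 1/4 := by simp
  have hgev : 3/4 ≤ eval (ev g) q := by
    rw [hq]
    have hint1 : Integrable (fun h : ↥K => eval (ev (g * w h)) P₀) μ := by
      refine Continuous.integrable_of_hasCompactSupport ?_ ((isClosed_tsupport _).isCompact)
      exact cont_eval P₀ _ (fun s =>
        (continuous_apply _).comp ((continuous_apply _).comp (continuous_const.matrix_mul hw)))
    have hpt : ∀ h : ↥K, (3:ℝ)/4 ≤ eval (ev (g * w h)) P₀ := by
      intro h
      have hmem : g * w h ∈ gS := ⟨w h, hwS h, rfl⟩
      have h1 := happrox (g * w h) (Or.inr hmem)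
      have h2 : F (g * w h) = 1 := hF1 hmem
      rw [h2] at h1
      have := abs_lt.mp h1
      have h3 := this.1
      linarith
    calc (3:ℝ)/4 = ∫ _ : ↥K, (3:ℝ)/4 ∂μ := by simp
    _ ≤ _ := MeasureTheory.integral_mono (MeasureTheory.integrable_const _) hint1 hpt
  refine ⟨q - MvPolynomial.C c, ?_, ?_⟩
  · intro x hx
    rw [map_sub, eval_C, hconst x hx, sub_self]
  · rw [map_sub, eval_C]
    have hc2 := abs_le.mp hcbound
    intro hzero
    have : eval (ev g) q = c := by linarith
    linarith [hgev, hc2.2, this ▸ hgev]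

noncomputable def vanIdeal {n : ℕ} (A : Set (Mat n)) : Ideal (MvPolynomial (Fin n × Fin n) ℝ) where
  carrier := {P | ∀ x ∈ A, eval (ev x) P = 0}
  add_mem' := fun {p q} hp hq x hx => by simp [map_add, hp x hx, hq x hx]
  zero_mem' := fun x hx => by simp
  smul_mem' := fun c P hP x hx => by simp [smul_eq_mul, hP x hx]

/-- A continuous injective group endomorphism of a compact matrix group is
surjective. -/
theorem continuous_injective_endomorphism_surjective
    (n : ℕ) (hn : 0 < n)
    (G : Subgroup (Matrix (Fin n) (Fin n) ℝ)ˣ)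
    (hcompact : IsCompact
      ((fun u : (Matrix (Fin n) (Fin n) ℝ)ˣ => (u : Matrix (Fin n) (Fin n) ℝ)) ''
        (G : Set (Matrix (Fin n) (Fin n) ℝ)ˣ)))
    (f : G →* G) (hf_cont : Continuous f) (hf_inj : Function.Injective f) :
    Function.Surjective f := by
  classical
  have emb : IsEmbedding (Units.val : (Mat n)ˣ → Mat n) := by
    apply Units.isEmbedding_val_mk' (f := Inv.inv)
    · intro A hA
      exact (continuousAt_matrix_inv A (by
        rw [Ring.inverse_eq_inv']
        exact continuousAt_inv₀ ((Matrix.isUnit_iff_isUnit_det A).mp hA).ne_zero)).continuousWithinAt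
    · intro u; exact (Matrix.coe_units_inv u).symm
  have hGc : IsCompact (G : Set (Mat n)ˣ) := by
    rw [emb.isCompact_iff]; exact hcompact
  haveI : CompactSpace ↥G := isCompact_iff_compactSpace.mp hGc
  let fE : Monoid.End ↥G := f
  have hcontk : ∀ k : ℕ, Continuous ⇑(fE ^ k) := by
    intro k
    rw [Monoid.End.coe_pow]
    exact hf_cont.iterate k
  have hinjk : ∀ k : ℕ, Function.Injective ⇑(fE ^ k) := by
    intro k
    rw [Monoid.End.coe_pow]
    exact hf_inj.iterate k
  let K : ℕ → Subgroup (Mat n)ˣ := fun k => ((fE ^ k).range.map G.subtype)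
  let S : ℕ → Set (Mat n) := fun k => Units.val '' (K k : Set (Mat n)ˣ)
  have hKset : ∀ k, (K k : Set (Mat n)ˣ) = G.subtype '' Set.range ⇑(fE ^ k) := by
    intro k
    rw [Subgroup.coe_map]
    rfl
  have hKc : ∀ k, IsCompact ((K k : Set (Mat n)ˣ)) := by
    intro k
    rw [hKset k]
    exact ((isCompact_range (hcontk k)).image continuous_subtype_val)
  have hmono : ∀ k, S (k + 1) ⊆ S k := by
    intro k x hx
    obtain ⟨u, hu, rfl⟩ := hx
    rw [hKset (k+1)] at hu
    obtain ⟨y, ⟨z, rfl⟩, rfl⟩ := hu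
    refine ⟨G.subtype ((fE ^ k) (fE z)), ?_, rfl⟩
    rw [hKset k]
    exact ⟨(fE ^ k) (fE z), ⟨fE z, rfl⟩, rfl⟩
  have hpow_succ : ∀ (k : ℕ) (z : ↥G), (fE ^ (k + 1)) z = (fE ^ k) (fE z) := by
    intro k z
    rw [pow_succ]
    rfl
  -- the ideal chain
  let I : ℕ →o Ideal (MvPolynomial (Fin n × Fin n) ℝ) :=
    ⟨fun k => vanIdeal (S k), by
      intro a b hab
      induction hab with
      | refl => exact le_refl _
      | step _ ih => exact le_trans ih (fun P hP x hx => hP x (hmono _ hx))⟩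
  obtain ⟨k₀, hk₀⟩ := monotone_stabilizes_iff_noetherian.mpr inferInstance I
  have hstab : I k₀ = I (k₀ + 1) := hk₀ (k₀ + 1) (Nat.le_succ _)
  -- S k₀ = S (k₀+1)
  have hSeq : S k₀ = S (k₀ + 1) := by
    apply Set.Subset.antisymm
    · intro x hx
      by_contra hxn
      obtain ⟨P, hP0, hPne⟩ := aux_sep (K (k₀ + 1)) (hKc (k₀ + 1)) x hxn
      have hPmem : P ∈ I (k₀ + 1) := hP0
      rw [← hstab] at hPmem
      exact hPne (hPmem x hx)
    · exact hmono k₀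
  -- conclude surjectivity
  intro y
  have h1 : Units.val (G.subtype ((fE ^ k₀) y)) ∈ S k₀ := by
    refine ⟨G.subtype ((fE ^ k₀) y), ?_, rfl⟩
    rw [hKset k₀]
    exact ⟨(fE ^ k₀) y, ⟨y, rfl⟩, rfl⟩
  rw [hSeq] at h1
  obtain ⟨u, hu, huv⟩ := h1
  rw [hKset (k₀ + 1)] at hu
  obtain ⟨y', ⟨z, rfl⟩, rfl⟩ := hu
  have h2 : (fE ^ (k₀ + 1)) z = (fE ^ k₀) y :=
    Subtype.ext (Units.ext huv)
  rw [hpow_succ k₀ z] at h2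
  exact ⟨z, hinjk k₀ h2⟩
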